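/- Let m, n ∈ ℕ with m ≥ 2 and n ≥ 2. Define, for non-integer real a and c, F(a,c) := 4 λ(a) λ(c) sin(πa/2) sin(πc/2) { ζ(1−a) ζ(1−c) − ζ(1−a−c) B(a,c) / (1 − tan(πa/2) tan(πc/2)) }. Then the iterated limit lim_{a→m} lim_{c→n} F(a,c), with a and c approaching m and n through non-integer real values, exists and equals ζ(m) ζ(n) − (1/2) ζ(m+n). -/

import Mathlib

open Real Filter Topology

/-- Riemann zeta as a real-valued function of a real argument. -/
noncomputable def rzeta (s : ℝ) : ℝ := (riemannZeta (s : ℂ)).re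

/-- `λ(z) = Γ(1-z)/(2π)^(1-z)`. -/
noncomputable def lam (z : ℝ) : ℝ := Real.Gamma (1 - z) / (2 * π) ^ (1 - z)

/-- Euler Beta function. -/
noncomputable def Beta (a c : ℝ) : ℝ := Real.Gamma a * Real.Gamma c / Real.Gamma (a + c)

/-- The reals which are not natural numbers. -/
def nonInt : Set ℝ := {x : ℝ | ∀ k : ℕ, x ≠ k}

/-- The function `F(a,c)` appearing in the limit `L₁(m,n)`. -/
noncomputable def F (a c : ℝ) : ℝ :=
  4 * lam a * lam c * Real.sin (π * a / 2) * Real.sin (π * c / 2) *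
    (rzeta (1 - a) * rzeta (1 - c) -
      rzeta (1 - a - c) * Beta a c /
        (1 - Real.tan (π * a / 2) * Real.tan (π * c / 2)))

/- ### Auxiliary lemmas -/

lemma rzeta_one_sub' {x : ℝ} (h1 : ∀ n : ℕ, x ≠ -n) (h2 : x ≠ 1) :
    rzeta (1 - x) = 2 * (2 * π) ^ (-x) * Real.Gamma x * Real.cos (π * x / 2) * rzeta x := by
  have key := riemannZeta_one_sub (s := (x : ℂ))
    (fun n hn => h1 n (by exact_mod_cast hn)) (by exact_mod_cast h2)
  have hcast : (2 : ℂ) * (2 * (π:ℂ)) ^ (-(x:ℂ)) * Complex.Gamma x * Complex.cos ((π:ℂ) * x / 2)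
      = ((2 * (2 * π) ^ (-x) * Real.Gamma x * Real.cos (π * x / 2) : ℝ) : ℂ) := by
    rw [show ((2 * (2 * π) ^ (-x) * Real.Gamma x * Real.cos (π * x / 2) : ℝ) : ℂ)
        = (2:ℂ) * ((((2*π) ^ (-x) : ℝ)) : ℂ) * ((Real.Gamma x : ℝ) : ℂ)
          * ((Real.cos (π * x / 2) : ℝ) : ℂ) by push_cast; ring]
    rw [Complex.ofReal_cpow (by positivity) (-x), Complex.Gamma_ofReal, Complex.ofReal_cos]
    push_cast
    ring
  have hco : ((1 - x : ℝ) : ℂ) = 1 - (x : ℂ) := by push_cast; ring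
  rw [rzeta, hco, key, hcast, Complex.re_ofReal_mul, rzeta]

lemma rzeta_refl {x : ℝ} (hx : ∀ k : ℕ, x ≠ k) :
    rzeta x = 2 * lam x * Real.sin (π * x / 2) * rzeta (1 - x) := by
  have h1 : ∀ n : ℕ, (1 - x) ≠ -(n : ℝ) := by
    intro n h
    exact hx (n + 1) (by push_cast; linarith)
  have h2 : (1 - x) ≠ 1 := by
    intro h
    exact hx 0 (by push_cast; linarith)
  have key := rzeta_one_sub' h1 h2
  rw [show (1 - (1 - x) : ℝ) = x by ring] at key
  rw [key, show (π * (1 - x) / 2 : ℝ) = π/2 - π * x / 2 by ring, Real.cos_pi_div_two_sub]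
  rw [lam, show (-(1-x) : ℝ) = x - 1 by ring]
  rw [show ((2*π) ^ (x-1) : ℝ) = ((2*π) ^ (1-x) : ℝ)⁻¹ by
    rw [← Real.rpow_neg (by positivity)]; congr 1; ring]
  have hp : ((2*π) ^ (1-x) : ℝ) ≠ 0 := by positivity
  field_simp

lemma cos_half_ne_zero {x : ℝ} (hx : ∀ k : ℤ, x ≠ k) : Real.cos (π * x / 2) ≠ 0 := by
  rw [Real.cos_ne_zero_iff]
  intro k h
  apply hx (2 * k + 1)
  have hπ : π ≠ 0 := Real.pi_ne_zero
  have h2 : π * x = π * (2 * (k:ℝ) + 1) := by linarith [h]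
  have := mul_left_cancel₀ hπ h2
  push_cast
  linarith [this]

lemma sin_pi_ne_zero {x : ℝ} (hx : ∀ k : ℤ, x ≠ k) : Real.sin (π * x) ≠ 0 := by
  rw [Real.sin_ne_zero_iff]
  intro k h
  apply hx k
  have hπ : π ≠ 0 := Real.pi_ne_zero
  have h2 : π * (k : ℝ) = π * x := by linarith [h]
  exact (mul_left_cancel₀ hπ h2).symm

lemma gamma_one_sub_ne_zero {x : ℝ} (hx : ∀ k : ℤ, x ≠ k) : Real.Gamma (1 - x) ≠ 0 := by
  apply Real.Gamma_ne_zero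
  intro m h
  exact hx (1 + m) (by push_cast; linarith)

lemma gamma_ne_zero' {x : ℝ} (hx : ∀ k : ℤ, x ≠ k) : Real.Gamma x ≠ 0 := by
  apply Real.Gamma_ne_zero
  intro m h
  exact hx (-m) (by push_cast; linarith)

lemma int_of_nat {x : ℝ} (hx : ∀ k : ℤ, x ≠ k) : ∀ k : ℕ, x ≠ k := by
  intro k h
  exact hx k (by exact_mod_cast h)

lemma rzeta_contAt {t : ℝ} (ht : (t : ℂ) ≠ 1) : ContinuousAt rzeta t := by
  have h1 : ContinuousAt (fun z : ℂ => riemannZeta z) (t : ℂ) :=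
    (differentiableAt_riemannZeta ht).continuousAt
  exact Complex.continuous_re.continuousAt.comp
    (h1.comp Complex.continuous_ofReal.continuousAt)

lemma claim2 (a c : ℝ) (ha : ∀ k : ℤ, a ≠ k) (hc : ∀ k : ℤ, c ≠ k)
    (hac : ∀ k : ℤ, a + c ≠ k) :
    4 * lam a * lam c * Real.sin (π * a / 2) * Real.sin (π * c / 2) *
      (rzeta (1 - a - c) * Beta a c /
        (1 - Real.tan (π * a / 2) * Real.tan (π * c / 2)))
    = (1 / 2) * rzeta (a + c) := by
  have hπ : (0:ℝ) < 2 * π := by positivity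
  have hπ' : π ≠ 0 := Real.pi_ne_zero
  have hcA : Real.cos (π * a / 2) ≠ 0 := cos_half_ne_zero ha
  have hcC : Real.cos (π * c / 2) ≠ 0 := cos_half_ne_zero hc
  have hcS : Real.cos (π * (a + c) / 2) ≠ 0 := cos_half_ne_zero hac
  have hsA : Real.sin (π * a) ≠ 0 := sin_pi_ne_zero ha
  have hsC : Real.sin (π * c) ≠ 0 := sin_pi_ne_zero hc
  have hG1a : Real.Gamma (1 - a) ≠ 0 := gamma_one_sub_ne_zero ha
  have hG1c : Real.Gamma (1 - c) ≠ 0 := gamma_one_sub_ne_zero hc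
  have hGS : Real.Gamma (a + c) ≠ 0 := gamma_ne_zero' hac
  have hD : 1 - Real.tan (π * a / 2) * Real.tan (π * c / 2)
      = Real.cos (π * (a + c) / 2) / (Real.cos (π * a / 2) * Real.cos (π * c / 2)) := by
    rw [Real.tan_eq_sin_div_cos, Real.tan_eq_sin_div_cos,
      show (π * (a + c) / 2 : ℝ) = π * a / 2 + π * c / 2 by ring, Real.cos_add]
    field_simp
  have hGa : Real.Gamma a = π / (Real.sin (π * a) * Real.Gamma (1 - a)) := by
    have h := Real.Gamma_mul_Gamma_one_sub a
    rw [eq_div_iff hsA] at h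
    rw [eq_div_iff (mul_ne_zero hsA hG1a)]
    linear_combination h
  have hGc : Real.Gamma c = π / (Real.sin (π * c) * Real.Gamma (1 - c)) := by
    have h := Real.Gamma_mul_Gamma_one_sub c
    rw [eq_div_iff hsC] at h
    rw [eq_div_iff (mul_ne_zero hsC hG1c)]
    linear_combination h
  have hz : rzeta (1 - a - c) = 2 * (2*π) ^ (-(a+c)) * Real.Gamma (a+c)
      * Real.cos (π * (a+c) / 2) * rzeta (a+c) := by
    rw [show (1 - a - c : ℝ) = 1 - (a + c) by ring]
    exact rzeta_one_sub' (fun n h => hac (-n) (by push_cast; linarith))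
      (fun h => hac 1 (by exact_mod_cast h))
  have hdA : Real.sin (π * a) = 2 * Real.sin (π * a / 2) * Real.cos (π * a / 2) := by
    rw [← Real.sin_two_mul]; congr 1; ring
  have hdC : Real.sin (π * c) = 2 * Real.sin (π * c / 2) * Real.cos (π * c / 2) := by
    rw [← Real.sin_two_mul]; congr 1; ring
  have hp1 : ((2*π) ^ (1 - a) : ℝ) ≠ 0 := by positivity
  have hp2 : ((2*π) ^ (1 - c) : ℝ) ≠ 0 := by positivity
  have hps : ((2*π) ^ (-(a+c)) : ℝ)
      = ((2*π) ^ (1 - a) : ℝ) * ((2*π) ^ (1 - c) : ℝ) / (2*π)^(2:ℕ) := by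
    rw [eq_div_iff (by positivity), ← Real.rpow_natCast (2*π) 2,
      ← Real.rpow_add hπ, ← Real.rpow_add hπ]
    congr 1
    push_cast; ring
  have hsa2 : Real.sin (π * a / 2) ≠ 0 := fun h => hsA (by rw [hdA, h]; ring)
  have hsc2 : Real.sin (π * c / 2) ≠ 0 := fun h => hsC (by rw [hdC, h]; ring)
  rw [hz, hD, Beta, hGa, hGc, lam, lam, hdA, hdC, hps]
  field_simp
  rw [mul_comm π a] at hsa2 hcA
  field_simp
  ring

lemma claim1 (a c : ℝ) (ha : ∀ k : ℕ, a ≠ k) (hc : ∀ k : ℕ, c ≠ k) :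
    4 * lam a * lam c * Real.sin (π * a / 2) * Real.sin (π * c / 2) *
      (rzeta (1 - a) * rzeta (1 - c)) = rzeta a * rzeta c := by
  rw [rzeta_refl ha, rzeta_refl hc]
  ring

lemma F_eq (a c : ℝ) (ha : ∀ k : ℤ, a ≠ k) (hc : ∀ k : ℤ, c ≠ k)
    (hac : ∀ k : ℤ, a + c ≠ k) :
    F a c = rzeta a * rzeta c - (1 / 2) * rzeta (a + c) := by
  have e : F a c =
      4 * lam a * lam c * Real.sin (π * a / 2) * Real.sin (π * c / 2) *
        (rzeta (1 - a) * rzeta (1 - c)) -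
      4 * lam a * lam c * Real.sin (π * a / 2) * Real.sin (π * c / 2) *
        (rzeta (1 - a - c) * Beta a c /
          (1 - Real.tan (π * a / 2) * Real.tan (π * c / 2))) := by
    rw [F]; ring
  rw [e, claim1 a c (int_of_nat ha) (int_of_nat hc), claim2 a c ha hc hac]

lemma F_int (a c : ℝ) (k : ℤ) (hk : a = k) (hklt : k < 0)
    (ha : ∀ j : ℕ, a ≠ j) (hc : ∀ j : ℕ, c ≠ j) :
    F a c = rzeta a * rzeta c := by
  have hGa : Real.Gamma a = 0 := by
    have h1 : a = -(((-k).toNat : ℕ) : ℝ) := by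
      have h0 : ((-k).toNat : ℤ) = -k := Int.toNat_of_nonneg (by omega)
      have h2 : (((-k).toNat : ℕ) : ℝ) = ((-k : ℤ) : ℝ) := by exact_mod_cast h0
      rw [hk, h2]
      push_cast
      ring
    rw [h1]
    exact Real.Gamma_neg_nat_eq_zero _
  have : F a c = 4 * lam a * lam c * Real.sin (π * a / 2) * Real.sin (π * c / 2) *
      (rzeta (1 - a) * rzeta (1 - c)) := by
    rw [F, Beta, hGa]
    ring_nf
  rw [this, claim1 a c ha hc]

theorem L1_iterated_limit (m n : ℕ) (hm : 2 ≤ m) (hn : 2 ≤ n) :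
    ∃ G : ℝ → ℝ,
      (∀ a ∈ nonInt, Tendsto (fun c => F a c) (𝓝[nonInt] (n : ℝ)) (𝓝 (G a))) ∧
      Tendsto G (𝓝[nonInt] (m : ℝ))
        (𝓝 (rzeta m * rzeta n - (1 / 2) * rzeta (m + n))) := by
  classical
  have hn1 : (((n : ℝ)) : ℂ) ≠ 1 := by
    intro h
    have : (n : ℝ) = 1 := by exact_mod_cast h
    have : n = 1 := by exact_mod_cast this
    omega
  refine ⟨fun a => if ∃ k : ℤ, a = (k : ℝ) then rzeta a * rzeta n
    else rzeta a * rzeta n - (1 / 2) * rzeta (a + n), ?_, ?_⟩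
  · intro a ha
    by_cases hint : ∃ k : ℤ, a = (k : ℝ)
    · simp only [if_pos hint]
      obtain ⟨k, hk⟩ := hint
      have hklt : k < 0 := by
        by_contra h
        push_neg at h
        exact ha k.toNat (by rw [hk]; congr 1; omega)
      have hbase : Tendsto (fun c => rzeta a * rzeta c) (𝓝[nonInt] (n : ℝ))
          (𝓝 (rzeta a * rzeta n)) :=
        ((continuousAt_const.mul (rzeta_contAt hn1)).tendsto).mono_left nhdsWithin_le_nhds
      refine hbase.congr' ?_ |>.congr (fun c => rfl) |>.mono_left le_rfl
      filter_upwards [eventually_mem_nhdsWithin] with c hcmem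
      exact (F_int a c k hk hklt ha hcmem).symm
    · simp only [if_neg hint]
      push_neg at hint
      have han : ∀ j : ℤ, a + (n : ℝ) ≠ j := by
        intro j h
        exact hint (j - n) (by push_cast; linarith)
      have han1 : (Complex.ofReal (a + (n : ℝ))) ≠ 1 := by
        intro h
        exact han 1 (by exact_mod_cast h)
      set k0 := ⌊a + (n : ℝ)⌋ with hk0
      have hU : (Set.Ioo ((n : ℝ) - 1) ((n : ℝ) + 1) ∩
          (fun c => a + c) ⁻¹' Set.Ioo ((k0 : ℝ)) ((k0 : ℝ) + 1)) ∈ 𝓝 ((n : ℝ)) := by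
        apply IsOpen.mem_nhds
        · exact isOpen_Ioo.inter (isOpen_Ioo.preimage (continuous_const.add continuous_id))
        · constructor
          · constructor <;> linarith
          · constructor
            · exact lt_of_le_of_ne (Int.floor_le _) (fun h => han k0 h.symm)
            · exact Int.lt_floor_add_one _
      have hbase : Tendsto (fun c => rzeta a * rzeta c - (1 / 2) * rzeta (a + c))
          (𝓝[nonInt] (n : ℝ))
          (𝓝 (rzeta a * rzeta n - (1 / 2) * rzeta (a + n))) := by
        apply Tendsto.mono_left _ nhdsWithin_le_nhds
        apply ContinuousAt.tendsto
        apply ContinuousAt.sub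
        · exact continuousAt_const.mul (rzeta_contAt hn1)
        · exact continuousAt_const.mul
            ((rzeta_contAt han1).comp ((continuous_const.add continuous_id).continuousAt))
      refine hbase.congr' ?_
      filter_upwards [eventually_mem_nhdsWithin,
        (eventually_of_mem hU (fun x hx => hx)).filter_mono nhdsWithin_le_nhds]
        with c hcni hcU
      have hc : ∀ j : ℤ, c ≠ j := by
        intro j h
        have h1 : (n : ℝ) - 1 < (j : ℝ) := by rw [← h]; exact hcU.1.1
        have h2 : (j : ℝ) < (n : ℝ) + 1 := by rw [← h]; exact hcU.1.2
        have hj : j = (n : ℤ) := by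
          have b1 : (n : ℤ) - 1 < j := by exact_mod_cast h1
          have b2 : j < (n : ℤ) + 1 := by exact_mod_cast h2
          omega
        exact hcni n (by rw [h, hj]; push_cast; ring)
      have hac : ∀ j : ℤ, a + c ≠ j := by
        intro j h
        have h1 : (k0 : ℝ) < (j : ℝ) := by rw [← h]; exact hcU.2.1
        have h2 : (j : ℝ) < (k0 : ℝ) + 1 := by rw [← h]; exact hcU.2.2
        have b1 : k0 < j := by exact_mod_cast h1
        have b2 : j < k0 + 1 := by exact_mod_cast h2
        omega
      exact (F_eq a c hint hc hac).symm
  · have hm1 : (((m : ℝ)) : ℂ) ≠ 1 := by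
      intro h
      have : (m : ℝ) = 1 := by exact_mod_cast h
      have : m = 1 := by exact_mod_cast this
      omega
    have hmn1 : (Complex.ofReal ((m : ℝ) + (n : ℝ))) ≠ 1 := by
      intro h
      have h1 : (m : ℝ) + (n : ℝ) = 1 := by exact_mod_cast h
      have h2 : (m : ℕ) + n = 1 := by exact_mod_cast h1
      omega
    have hbase : Tendsto (fun a => rzeta a * rzeta n - (1 / 2) * rzeta (a + n))
        (𝓝[nonInt] (m : ℝ))
        (𝓝 (rzeta m * rzeta n - (1 / 2) * rzeta (m + n))) := by
      apply Tendsto.mono_left _ nhdsWithin_le_nhds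
      apply ContinuousAt.tendsto
      apply ContinuousAt.sub
      · exact (rzeta_contAt hm1).mul continuousAt_const
      · have hcomp : ContinuousAt (fun x : ℝ => rzeta (x + (n : ℝ))) (m : ℝ) := by
          have := ContinuousAt.comp (g := rzeta) (f := fun x : ℝ => x + (n : ℝ))
            (x := (m : ℝ)) (rzeta_contAt hmn1) (continuous_add_right ((n : ℝ))).continuousAt
          exact this
        exact continuousAt_const.mul hcomp
    refine hbase.congr' ?_
    filter_upwards [eventually_mem_nhdsWithin,
      (eventually_of_mem (Ioo_mem_nhds (by linarith : (m:ℝ) - 1 < m)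
        (by linarith : (m:ℝ) < m + 1)) (fun x hx => hx)).filter_mono nhdsWithin_le_nhds]
      with a hani haI
    have hint : ¬ ∃ k : ℤ, a = (k : ℝ) := by
      rintro ⟨k, hk⟩
      have h1 : (m : ℝ) - 1 < (k : ℝ) := by rw [← hk]; exact haI.1
      have h2 : (k : ℝ) < (m : ℝ) + 1 := by rw [← hk]; exact haI.2
      have b1 : (m : ℤ) - 1 < k := by exact_mod_cast h1
      have b2 : k < (m : ℤ) + 1 := by exact_mod_cast h2
      have : k = (m : ℤ) := by omega
      exact hani m (by rw [hk, this]; push_cast; ring)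
    simp only [if_neg hint]
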